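/- With σ₀ = 0 < σ₁ < σ₂ < ⋯, prox-centers x̄_s := (1 - γ_s)x̄_{s-1} + γ_s x_{s-1} where γ_s = 1 - σ_{s-1}/σ_s and x̄₀ = x₀, and x_s^* the minimizer of f(x) + (σ_s/2)‖x - x̄_s‖² for convex differentiable f, the identity σ_s(x̄_s - x_s^*) = Σ_{i=1}^s [σ_{i-1}(x_{i-1}^* - x_{i-1}) + σ_i(x_{i-1} - x_i^*)] holds, and hence σ_s‖x̄_s - x_s^*‖ ≤ Σ_{i=1}^s (σ_{i-1} + σ_i)‖x_{i-1}^* - x_{i-1}‖, using ‖x_{i-1} - x_i^*‖ ≤ ‖x_{i-1} - x_{i-1}^*‖. -/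

import Mathlib

open RealInnerProductSpace

theorem stmt_15 {n : ℕ} (f : EuclideanSpace ℝ (Fin n) → ℝ)
    (hf : ConvexOn ℝ Set.univ f) (hdiff : Differentiable ℝ f)
    (σ : ℕ → ℝ) (hσ0 : σ 0 = 0) (hσmono : ∀ s, σ s < σ (s + 1))
    (x xb xstar : ℕ → EuclideanSpace ℝ (Fin n))
    (hxb0 : xb 0 = x 0)
    (hxb : ∀ s, 1 ≤ s → xb s = (1 - (1 - σ (s - 1) / σ s)) • xb (s - 1) +
      (1 - σ (s - 1) / σ s) • x (s - 1))
    (hstar : ∀ s y, f (xstar s) + σ s / 2 * ‖xstar s - xb s‖ ^ 2 ≤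
      f y + σ s / 2 * ‖y - xb s‖ ^ 2)
    (hdist : ∀ i, 1 ≤ i → ‖x (i - 1) - xstar i‖ ≤ ‖x (i - 1) - xstar (i - 1)‖) :
    ∀ s, (σ s • (xb s - xstar s) =
        ∑ i ∈ Finset.range s,
          (σ i • (xstar i - x i) + σ (i + 1) • (x i - xstar (i + 1)))) ∧
      σ s * ‖xb s - xstar s‖ ≤
        ∑ i ∈ Finset.range s, (σ i + σ (i + 1)) * ‖xstar i - x i‖ := by
  have hnn : ∀ s, 0 ≤ σ s := by
    intro s
    induction s with
    | zero => simp [hσ0]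
    | succ k ih => exact le_of_lt (lt_of_le_of_lt ih (hσmono k))
  have hpos : ∀ s, 0 < σ (s + 1) := fun s => lt_of_le_of_lt (hnn s) (hσmono s)
  have hid : ∀ s, σ s • (xb s - xstar s) =
      ∑ i ∈ Finset.range s,
        (σ i • (xstar i - x i) + σ (i + 1) • (x i - xstar (i + 1))) := by
    intro s
    induction s with
    | zero => simp [hσ0]
    | succ k ih =>
      rw [Finset.sum_range_succ, ← ih]
      have hrec := hxb (k + 1) (by omega)
      simp only [Nat.add_sub_cancel] at hrec
      have hne : σ (k + 1) ≠ 0 := ne_of_gt (hpos k)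
      have key : σ (k + 1) • xb (k + 1) = σ k • xb k + (σ (k + 1) - σ k) • x k := by
        rw [hrec, smul_add, smul_smul, smul_smul]
        have h1 : σ (k + 1) * (1 - (1 - σ k / σ (k + 1))) = σ k := by
          field_simp
          ring
        have h2 : σ (k + 1) * (1 - σ k / σ (k + 1)) = σ (k + 1) - σ k := by
          field_simp
        rw [h1, h2]
      have : σ (k + 1) • (xb (k + 1) - xstar (k + 1))
          = σ (k + 1) • xb (k + 1) - σ (k + 1) • xstar (k + 1) := smul_sub _ _ _
      rw [this, key]
      simp only [smul_sub, sub_smul]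
      abel
  intro s
  refine ⟨hid s, ?_⟩
  have h1 : σ s * ‖xb s - xstar s‖ = ‖σ s • (xb s - xstar s)‖ := by
    rw [norm_smul, Real.norm_eq_abs, abs_of_nonneg (hnn s)]
  rw [h1, hid s]
  calc ‖∑ i ∈ Finset.range s,
        (σ i • (xstar i - x i) + σ (i + 1) • (x i - xstar (i + 1)))‖
      ≤ ∑ i ∈ Finset.range s,
        ‖σ i • (xstar i - x i) + σ (i + 1) • (x i - xstar (i + 1))‖ :=
        norm_sum_le _ _
    _ ≤ ∑ i ∈ Finset.range s, (σ i + σ (i + 1)) * ‖xstar i - x i‖ := by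
        apply Finset.sum_le_sum
        intro i _
        calc ‖σ i • (xstar i - x i) + σ (i + 1) • (x i - xstar (i + 1))‖
            ≤ ‖σ i • (xstar i - x i)‖ + ‖σ (i + 1) • (x i - xstar (i + 1))‖ :=
              norm_add_le _ _
          _ ≤ (σ i + σ (i + 1)) * ‖xstar i - x i‖ := by
              rw [norm_smul, norm_smul, Real.norm_eq_abs, Real.norm_eq_abs,
                abs_of_nonneg (hnn i), abs_of_nonneg (hnn (i + 1)), add_mul]
              have h2 : ‖x i - xstar (i + 1)‖ ≤ ‖xstar i - x i‖ := by
                have := hdist (i + 1) (by omega)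
                simp only [Nat.add_sub_cancel] at this
                rw [norm_sub_rev (xstar i)]
                exact this
              gcongr
              exact hnn (i + 1)
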